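/- arXiv:1205.3900 — 2 statements merged into one kernel-verified Lean document; each statement's English description precedes it below -/
import Mathlib

section
/- Let α > 0, β ∈ (0,1), and let q̄ ∈ [0,1) satisfy the replica symmetric fixed-point equation q̄ = ∫ tanh²( z √(αβ p̄) ) dμ(z), where p̄ = β q̄ / (1 − β(1−q̄))². Set β₁ = √α β / (1 − β(1−q̄)) and β₂ = 1 − β(1−q̄), and define: A_NN^RS = ln 2 + ∫ ln cosh( z √(αβ p̄) ) dμ(z) + (α/2) ln( 1/(1 − β(1−q̄)) ) + (αβ/2) q̄/(1 − β(1−q̄)) − (αβ/2) p̄ (1−q̄); A_SK^RS(β₁) = ln 2 + ∫ ln cosh( β₁ √q̄ z ) dμ(z) + (β₁²/4)(1 − q̄)² with q̄_SK = q̄; and A_Gauss^RS(β₂,β) = (1/2) ln σ² + (1/2) β₂² p̄_G σ² + (1/4) β₂² p̄_G², where p̄_G = (β₂ − (1−β))/β₂² and σ² = 1/(1 − β + β₂² p̄_G). Then the replica symmetric pressure of the analogical neural network decomposes linearly: A_NN^RS = A_SK^RS(β₁) − β₁²/4 + α A_Gauss^RS(β₂,β). -/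
set_option maxHeartbeats 1000000


open MeasureTheory ProbabilityTheory Real

noncomputable section

/-- The replica symmetric pressure of the analogical neural network decomposes linearly
into the SK replica symmetric pressure at noise `β₁` and (α times) the Gaussian
spin-glass replica symmetric pressure at noise `β₂`. -/
theorem hopfield_RS_decomposition (α β qbar : ℝ) (hα : 0 < α)
    (hβ : β ∈ Set.Ioo (0 : ℝ) 1) (hq0 : 0 ≤ qbar) (hq1 : qbar < 1)
    (pbar β₁ β₂ pG s ANN ASK AG : ℝ)
    (hpbar : pbar = β * qbar / (1 - β * (1 - qbar)) ^ 2)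
    (hfix : qbar = ∫ z, (Real.tanh (z * Real.sqrt (α * β * pbar))) ^ 2 ∂(gaussianReal 0 1))
    (hβ₁ : β₁ = Real.sqrt α * β / (1 - β * (1 - qbar)))
    (hβ₂ : β₂ = 1 - β * (1 - qbar))
    (hpG : pG = (β₂ - (1 - β)) / β₂ ^ 2)
    (hs : s = 1 / (1 - β + β₂ ^ 2 * pG))
    (hANN : ANN = Real.log 2
        + (∫ z, Real.log (Real.cosh (z * Real.sqrt (α * β * pbar))) ∂(gaussianReal 0 1))
        + (α / 2) * Real.log (1 / (1 - β * (1 - qbar)))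
        + (α * β / 2) * (qbar / (1 - β * (1 - qbar)))
        - (α * β / 2) * pbar * (1 - qbar))
    (hASK : ASK = Real.log 2
        + (∫ z, Real.log (Real.cosh (β₁ * Real.sqrt qbar * z)) ∂(gaussianReal 0 1))
        + (β₁ ^ 2 / 4) * (1 - qbar) ^ 2)
    (hAG : AG = (1 / 2) * Real.log s + (1 / 2) * β₂ ^ 2 * pG * s + (1 / 4) * β₂ ^ 2 * pG ^ 2) :
    ANN = ASK - β₁ ^ 2 / 4 + α * AG := by
  obtain ⟨hβ0, hβ1⟩ := hβ
  have hD : 0 < 1 - β * (1 - qbar) := by nlinarith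
  have hDne : (1 - β * (1 - qbar)) ≠ 0 := hD.ne'
  have hsa : Real.sqrt α ^ 2 = α := Real.sq_sqrt hα.le
  have hsq' : Real.sqrt qbar ^ 2 = qbar := Real.sq_sqrt hq0
  have h1 : α * β * pbar = (β₁ * Real.sqrt qbar) ^ 2 := by
    rw [hβ₁, hpbar]
    rw [mul_pow, div_pow, mul_pow, hsq', hsa]
    ring
  have hsqrt : Real.sqrt (α * β * pbar) = β₁ * Real.sqrt qbar := by
    rw [h1, Real.sqrt_sq]
    rw [hβ₁]
    positivity
  have hint : (∫ z, Real.log (Real.cosh (z * Real.sqrt (α * β * pbar))) ∂(gaussianReal 0 1))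
      = ∫ z, Real.log (Real.cosh (β₁ * Real.sqrt qbar * z)) ∂(gaussianReal 0 1) := by
    rw [hsqrt]
    congr 1
    funext z
    rw [mul_comm]
  have hb1sq : β₁ ^ 2 = α * β ^ 2 / (1 - β * (1 - qbar)) ^ 2 := by
    rw [hβ₁]
    field_simp
    nlinarith [hsa]
  have hpG' : β₂ ^ 2 * pG = β * qbar := by
    rw [hpG, hβ₂]
    field_simp
    ring
  have hpGval : pG = β * qbar / (1 - β * (1 - qbar)) ^ 2 := by
    rw [hpG, hβ₂]
    congr 1
    ring
  have hsval : s = 1 / (1 - β * (1 - qbar)) := by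
    rw [hs, hpG']
    ring_nf
  rw [hANN, hASK, hAG, hint, hb1sq, hsval, hpbar, hpGval, hβ₂]
  field_simp
  ring
end
end

section
/- Let α > 0 and β ≥ 0 with β(1+√α) < 1, set T = β√α and g₀ = (1−β)^{−2}. Suppose A, D, G : [0,T] → ℝ are differentiable and satisfy the system A' = 2AD, D' = AG + D², G' = 2GD on [0,T], with initial conditions A(0) = 1, D(0) = 0, G(0) = g₀. Then for all s ∈ [0,T] one has A(s) = 1/(1−g₀s²), D(s) = g₀ s/(1−g₀s²), G(s) = g₀/(1−g₀s²); in particular the rescaled overlap fluctuations of the analogical Hopfield model in the ergodic region are A(T) = ⟨ξ₁₂²⟩ = (1−β)²/((1−β)² − β²α), D(T) = ⟨ξ₁₂η₁₂⟩ = β√α/((1−β)² − β²α), and G(T) = ⟨η₁₂²⟩ = 1/((1−β)² − β²α), which diverge as β(1+√α) → 1, i.e. on the critical line β_c(α) = 1/(1+√α). -/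
open Real
open Metric Set



lemma hf_aux1 (x y x' y' R Dd : ℝ) (hR : 0 ≤ R) (hD : 0 ≤ Dd)
    (hx : |x| ≤ R) (hy' : |y'| ≤ R) (h1 : |x - x'| ≤ Dd) (h2 : |y - y'| ≤ Dd) :
    |2*x*y - 2*x'*y'| ≤ 4*R*Dd := by
  have key : 2*x*y - 2*x'*y' = 2*x*(y-y') + 2*(x-x')*y' := by ring
  rw [key]
  calc |2*x*(y-y') + 2*(x-x')*y'| ≤ |2*x*(y-y')| + |2*(x-x')*y'| := abs_add_le _ _
    _ = 2*(|x| * |y-y'|) + 2*(|x-x'| * |y'|) := by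
        rw [abs_mul, abs_mul, abs_mul, abs_mul]; simp [abs_of_nonneg]; ring
    _ ≤ 2*(R*Dd) + 2*(Dd*R) := by
        gcongr <;> first | exact abs_nonneg _ | assumption
    _ = 4*R*Dd := by ring

lemma hf_aux2 (x y z x' y' z' R Dd : ℝ) (hR : 0 ≤ R) (hD : 0 ≤ Dd)
    (hx : |x| ≤ R) (hy : |y| ≤ R) (hy' : |y'| ≤ R) (hz' : |z'| ≤ R)
    (h1 : |x - x'| ≤ Dd) (h2 : |y - y'| ≤ Dd) (h3 : |z - z'| ≤ Dd) :
    |x*z + y^2 - (x'*z' + y'^2)| ≤ 4*R*Dd := by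
  have key : x*z + y^2 - (x'*z' + y'^2) = x*(z-z') + (x-x')*z' + (y+y')*(y-y') := by ring
  rw [key]
  calc |x*(z-z') + (x-x')*z' + (y+y')*(y-y')|
      ≤ |x*(z-z')| + |(x-x')*z'| + |(y+y')*(y-y')| := abs_add_three _ _ _
    _ = |x| * |z-z'| + |x-x'| * |z'| + |y+y'| * |y-y'| := by rw [abs_mul, abs_mul, abs_mul]
    _ ≤ R*Dd + Dd*R + (2*R)*Dd := by
        have : |y+y'| ≤ 2*R := by calc |y+y'| ≤ |y| + |y'| := abs_add_le _ _
                                      _ ≤ 2*R := by linarith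
        gcongr <;> first | exact abs_nonneg _ | assumption
    _ = 4*R*Dd := by ring

lemma quad_lip (R : ℝ) (hR : 0 ≤ R) :
    LipschitzOnWith (Real.toNNReal (4*R))
      (fun p : ℝ × ℝ × ℝ => ((2*p.1*p.2.1, p.1*p.2.2 + p.2.1^2, 2*p.2.2*p.2.1) : ℝ × ℝ × ℝ))
      (closedBall 0 R) := by
  apply LipschitzOnWith.of_dist_le_mul
  intro p hp q hq
  rw [Real.coe_toNNReal _ (by positivity)]
  have hpn : ‖p‖ ≤ R := by simpa using mem_closedBall_zero_iff.mp hp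
  have hqn : ‖q‖ ≤ R := by simpa using mem_closedBall_zero_iff.mp hq
  have hp1 : |p.1| ≤ R := le_trans (norm_fst_le p) hpn
  have hp2 : |p.2.1| ≤ R := le_trans (le_trans (norm_fst_le p.2) (norm_snd_le p)) hpn
  have hp3 : |p.2.2| ≤ R := le_trans (le_trans (norm_snd_le p.2) (norm_snd_le p)) hpn
  have hq1 : |q.1| ≤ R := le_trans (norm_fst_le q) hqn
  have hq2 : |q.2.1| ≤ R := le_trans (le_trans (norm_fst_le q.2) (norm_snd_le q)) hqn
  have hq3 : |q.2.2| ≤ R := le_trans (le_trans (norm_snd_le q.2) (norm_snd_le q)) hqn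
  have hd : 0 ≤ dist p q := dist_nonneg
  have hd1 : |p.1 - q.1| ≤ dist p q := by
    rw [← Real.dist_eq]
    exact le_trans (le_max_left _ _) (le_of_eq (Prod.dist_eq (x := p) (y := q)).symm)
  have hd2 : |p.2.1 - q.2.1| ≤ dist p q := by
    rw [← Real.dist_eq]
    calc dist p.2.1 q.2.1 ≤ dist p.2 q.2 := by rw [Prod.dist_eq]; exact le_max_left _ _
      _ ≤ dist p q := by rw [Prod.dist_eq (x := p)]; exact le_max_right _ _
  have hd3 : |p.2.2 - q.2.2| ≤ dist p q := by
    rw [← Real.dist_eq]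
    calc dist p.2.2 q.2.2 ≤ dist p.2 q.2 := by rw [Prod.dist_eq]; exact le_max_right _ _
      _ ≤ dist p q := by rw [Prod.dist_eq (x := p)]; exact le_max_right _ _
  rw [Prod.dist_eq, Prod.dist_eq]
  simp only [Real.dist_eq]
  apply max_le
  · exact hf_aux1 _ _ _ _ _ _ hR hd hp1 hq2 hd1 hd2
  apply max_le
  · exact hf_aux2 _ _ _ _ _ _ _ _ hR hd hp1 hp2 hq2 hq3 hd1 hd2 hd3
  · have := hf_aux1 p.2.2 p.2.1 q.2.2 q.2.1 R (dist p q) hR hd hp3 hq2 hd3 hd2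
    simpa using this


set_option maxHeartbeats 1000000 in
/-- Solution of the Gaussian-closure differential system for the rescaled overlap
fluctuations of the analogical Hopfield model in the ergodic region, and the resulting
values `⟨ξ₁₂²⟩, ⟨ξ₁₂η₁₂⟩, ⟨η₁₂²⟩` at the endpoint `T = β√α`, which diverge on the
critical line `β_c(α) = 1/(1+√α)`. -/
theorem hopfield_fluctuation_system (α β : ℝ) (hα : 0 < α) (hβ0 : 0 ≤ β)
    (hβc : β * (1 + Real.sqrt α) < 1)
    (T g₀ : ℝ) (hT : T = β * Real.sqrt α) (hg₀ : g₀ = (1 - β)⁻¹ ^ 2)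
    (A D G : ℝ → ℝ)
    (hA : ∀ s ∈ Set.Icc (0 : ℝ) T, HasDerivWithinAt A (2 * A s * D s) (Set.Icc 0 T) s)
    (hD : ∀ s ∈ Set.Icc (0 : ℝ) T,
      HasDerivWithinAt D (A s * G s + (D s) ^ 2) (Set.Icc 0 T) s)
    (hG : ∀ s ∈ Set.Icc (0 : ℝ) T, HasDerivWithinAt G (2 * G s * D s) (Set.Icc 0 T) s)
    (hA0 : A 0 = 1) (hD0 : D 0 = 0) (hG0 : G 0 = g₀) :
    (∀ s ∈ Set.Icc (0 : ℝ) T,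
        A s = 1 / (1 - g₀ * s ^ 2) ∧
        D s = g₀ * s / (1 - g₀ * s ^ 2) ∧
        G s = g₀ / (1 - g₀ * s ^ 2)) ∧
      A T = (1 - β) ^ 2 / ((1 - β) ^ 2 - β ^ 2 * α) ∧
      D T = β * Real.sqrt α / ((1 - β) ^ 2 - β ^ 2 * α) ∧
      G T = 1 / ((1 - β) ^ 2 - β ^ 2 * α) := by
  have hsa : 0 < Real.sqrt α := Real.sqrt_pos.mpr hα
  have hT0 : 0 ≤ T := by rw [hT]; positivity
  have h1β : β * Real.sqrt α < 1 - β := by nlinarith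
  have h1βpos : 0 < 1 - β := lt_of_le_of_lt (by positivity) h1β
  have hg0pos : 0 < g₀ := by rw [hg₀]; positivity
  have hsq : Real.sqrt α ^ 2 = α := Real.sq_sqrt hα.le
  have hTsq : T ^ 2 = β ^ 2 * α := by rw [hT, mul_pow, hsq]
  have h2 : T ^ 2 < (1 - β) ^ 2 := by
    rw [hT]
    have h0 : 0 ≤ β * Real.sqrt α := by positivity
    nlinarith
  have hkey : g₀ * T ^ 2 < 1 := by
    rw [hg₀, inv_pow]
    have := mul_lt_mul_of_pos_left h2 (a := (((1:ℝ)-β)^2)⁻¹) (by positivity)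
    rwa [inv_mul_cancel₀ (by positivity : ((1:ℝ)-β)^2 ≠ 0)] at this
  have hden : ∀ s ∈ Set.Icc (0:ℝ) T, 0 < 1 - g₀ * s ^ 2 := by
    intro s hs
    have h1 : s ^ 2 ≤ T ^ 2 := by nlinarith [hs.1, hs.2]
    nlinarith
  -- candidate functions
  set a : ℝ → ℝ := fun s => (1 - g₀ * s ^ 2)⁻¹ with ha_def
  set d : ℝ → ℝ := fun s => g₀ * s * (1 - g₀ * s ^ 2)⁻¹ with hd_def
  set g : ℝ → ℝ := fun s => g₀ * (1 - g₀ * s ^ 2)⁻¹ with hg_def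
  have hu : ∀ s : ℝ, HasDerivAt (fun s => 1 - g₀ * s ^ 2) (-(g₀ * (2 * s))) s := by
    intro s
    simpa using ((hasDerivAt_pow 2 s).const_mul g₀).const_sub 1
  have hA' : ∀ s ∈ Set.Icc (0:ℝ) T, HasDerivAt a (2 * a s * d s) s := by
    intro s hs
    have hne := (hden s hs).ne'
    have h := (hu s).inv hne
    refine h.congr_deriv ?_
    simp only [ha_def, hd_def]
    field_simp
  have hD' : ∀ s ∈ Set.Icc (0:ℝ) T, HasDerivAt d (a s * g s + (d s) ^ 2) s := by
    intro s hs
    have hne := (hden s hs).ne'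
    have h := ((hasDerivAt_id s).const_mul g₀).mul ((hu s).inv hne)
    refine h.congr_deriv ?_
    simp only [ha_def, hd_def, hg_def, Pi.inv_apply, id]
    field_simp
    ring
  have hG' : ∀ s ∈ Set.Icc (0:ℝ) T, HasDerivAt g (2 * g s * d s) s := by
    intro s hs
    have hne := (hden s hs).ne'
    have h := ((hu s).inv hne).const_mul g₀
    refine h.congr_deriv ?_
    simp only [hd_def, hg_def]
    field_simp
  -- bundled trajectories
  set F : ℝ → ℝ × ℝ × ℝ := fun s => (A s, D s, G s) with hF_def
  set C : ℝ → ℝ × ℝ × ℝ := fun s => (a s, d s, g s) with hC_def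
  have hFcont : ContinuousOn F (Set.Icc 0 T) := by
    intro s hs
    exact ((hA s hs).continuousWithinAt.prodMk
      (((hD s hs).continuousWithinAt).prodMk ((hG s hs).continuousWithinAt)))
  have hCcont : ContinuousOn C (Set.Icc 0 T) := by
    intro s hs
    exact ((hA' s hs).continuousAt.continuousWithinAt.prodMk
      (((hD' s hs).continuousAt.continuousWithinAt).prodMk
        ((hG' s hs).continuousAt.continuousWithinAt)))
  obtain ⟨R₁, hR₁⟩ := isCompact_Icc.exists_bound_of_continuousOn hFcont
  -- bound for the candidate
  have hcpos : 0 < 1 - g₀ * T ^ 2 := by linarith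
  set c : ℝ := 1 - g₀ * T ^ 2 with hc_def
  set R₂ : ℝ := (1 + g₀ + g₀ * T) * c⁻¹ with hR₂_def
  have hR₂pos : 0 < R₂ := by
    have : 0 < 1 + g₀ + g₀ * T := by positivity
    positivity
  have hCb : ∀ s ∈ Set.Icc (0:ℝ) T, ‖C s‖ ≤ R₂ := by
    intro s hs
    have hds := hden s hs
    have hlb : c ≤ 1 - g₀ * s ^ 2 := by
      have h1 : s ^ 2 ≤ T ^ 2 := by nlinarith [hs.1, hs.2]
      simp only [hc_def]; nlinarith
    have hinv : (1 - g₀ * s ^ 2)⁻¹ ≤ c⁻¹ := by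
      apply inv_anti₀ hcpos hlb
    have hinv0 : 0 ≤ (1 - g₀ * s ^ 2)⁻¹ := by positivity
    have hb1 : |a s| ≤ R₂ := by
      rw [abs_of_nonneg hinv0]
      calc (1 - g₀ * s ^ 2)⁻¹ ≤ c⁻¹ := hinv
        _ = 1 * c⁻¹ := (one_mul _).symm
        _ ≤ R₂ := by
            rw [hR₂_def]
            apply mul_le_mul_of_nonneg_right _ (inv_nonneg.mpr hcpos.le)
            nlinarith [mul_nonneg hg0pos.le hT0]
    have hb2 : |d s| ≤ R₂ := by
      have h0 : 0 ≤ g₀ * s := mul_nonneg hg0pos.le hs.1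
      rw [abs_of_nonneg (mul_nonneg h0 hinv0)]
      calc g₀ * s * (1 - g₀ * s ^ 2)⁻¹ ≤ g₀ * T * c⁻¹ := by
            apply mul_le_mul (by nlinarith [hs.2]) hinv hinv0 (by positivity)
        _ ≤ R₂ := by
            rw [hR₂_def]
            apply mul_le_mul_of_nonneg_right _ (inv_nonneg.mpr hcpos.le)
            linarith [hg0pos]
    have hb3 : |g s| ≤ R₂ := by
      rw [abs_of_nonneg (mul_nonneg hg0pos.le hinv0)]
      calc g₀ * (1 - g₀ * s ^ 2)⁻¹ ≤ g₀ * c⁻¹ := by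
            apply mul_le_mul_of_nonneg_left hinv hg0pos.le
        _ ≤ R₂ := by
            rw [hR₂_def]
            apply mul_le_mul_of_nonneg_right _ (inv_nonneg.mpr hcpos.le)
            nlinarith [mul_nonneg hg0pos.le hT0]
    simp only [hC_def, Prod.norm_def, Real.norm_eq_abs]
    exact max_le hb1 (max_le hb2 hb3)
  set R : ℝ := max R₁ R₂ with hR_def
  have hR0 : 0 ≤ R := le_trans hR₂pos.le (le_max_right _ _)
  -- the vector field
  set v : ℝ → ℝ × ℝ × ℝ → ℝ × ℝ × ℝ :=
    fun _ p => (2*p.1*p.2.1, p.1*p.2.2 + p.2.1^2, 2*p.2.2*p.2.1) with hv_def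
  have hlip : ∀ t : ℝ, LipschitzOnWith (Real.toNNReal (4*R)) (v t) (closedBall 0 R) :=
    fun _ => quad_lip R hR0
  have huniq : Set.EqOn F C (Set.Icc 0 T) := by
    apply ODE_solution_unique_of_mem_Icc_right (fun t _ => hlip t) hFcont ?_ ?_ hCcont ?_ ?_ ?_
    · -- F derivative
      intro t ht
      have ht' : t ∈ Set.Icc (0:ℝ) T := Set.mem_Icc_of_Ico ht
      have h := ((hA t ht').prodMk ((hD t ht').prodMk (hG t ht')))
      exact h.mono_of_mem_nhdsWithin (Icc_mem_nhdsGE_of_mem ht)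
    · intro t ht
      have ht' : t ∈ Set.Icc (0:ℝ) T := Set.mem_Icc_of_Ico ht
      rw [mem_closedBall_zero_iff]
      exact le_trans (hR₁ t ht') (le_max_left _ _)
    · intro t ht
      have ht' : t ∈ Set.Icc (0:ℝ) T := Set.mem_Icc_of_Ico ht
      exact (((hA' t ht').prodMk ((hD' t ht').prodMk (hG' t ht'))).hasDerivWithinAt)
    · intro t ht
      have ht' : t ∈ Set.Icc (0:ℝ) T := Set.mem_Icc_of_Ico ht
      rw [mem_closedBall_zero_iff]
      exact le_trans (hCb t ht') (le_max_right _ _)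
    · -- initial condition
      simp only [hF_def, hC_def, ha_def, hd_def, hg_def]
      rw [hA0, hD0, hG0]
      norm_num
  have hmain : ∀ s ∈ Set.Icc (0:ℝ) T,
      A s = 1 / (1 - g₀ * s ^ 2) ∧ D s = g₀ * s / (1 - g₀ * s ^ 2) ∧
      G s = g₀ / (1 - g₀ * s ^ 2) := by
    intro s hs
    have h := huniq hs
    simp only [hF_def, hC_def, Prod.mk.injEq, ha_def, hd_def, hg_def] at h
    refine ⟨?_, ?_, ?_⟩
    · rw [h.1, one_div]
    · rw [h.2.1, div_eq_mul_inv]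
    · rw [h.2.2, div_eq_mul_inv]
  refine ⟨hmain, ?_, ?_, ?_⟩
  all_goals
    have hTm : T ∈ Set.Icc (0:ℝ) T := ⟨hT0, le_refl T⟩
    obtain ⟨e1, e2, e3⟩ := hmain T hTm
    have hden' : (1:ℝ) - g₀ * T ^ 2 = ((1 - β) ^ 2 - β ^ 2 * α) / (1 - β) ^ 2 := by
      rw [hg₀, hTsq]
      field_simp
  · rw [e1, hden', one_div_div]
  · rw [e2, hden', hg₀, hT]
    rw [div_div_eq_mul_div]
    have hne : ((1:ℝ) - β) ^ 2 ≠ 0 := by positivity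
    field_simp
  · rw [e3, hden', hg₀]
    rw [div_div_eq_mul_div]
    have hne : ((1:ℝ) - β) ^ 2 ≠ 0 := by positivity
    field_simp
end
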